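/- (Group-replacement step of the weight-rounding lemma.) Let ℓ = k·g with k, g ≥ 1, and let w : Fin ℓ → ℝ be nondecreasing weights with 0 < w i ≤ 1. Partition Fin ℓ into k consecutive groups L₁, …, L_k of g items each (L_i consisting of indices (i−1)g, …, ig − 1), and define rounded weights w̃ by setting w̃ i equal to the weight of the largest-indexed item of the group containing i (so w̃ i ≥ w i, and w̃ is constant on each group). If F ⊆ Fin ℓ is packable into m unit-capacity bins under the weights w, then there exists a set F'' ⊆ Fin ℓ that is packable into m unit-capacity bins under the rounded weights w̃ and satisfies |F''| ≥ |F| − g. (F'' is obtained by dropping F ∩ L₁ and replacing each item of F ∩ L_i by an item of L_{i−1} for i ≥ 2.) -/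

import Mathlib

/-- `T` is packable into `m` unit-capacity bins under weights `u`. -/
def Packable {N : ℕ} (u : Fin N → ℝ) (m : ℕ) (T : Finset (Fin N)) : Prop :=
  ∃ p : Fin N → Fin m, ∀ j : Fin m, ∑ i ∈ T.filter (fun i => p i = j), u i ≤ 1

theorem group_replacement
    (m k g : ℕ) (hm : 1 ≤ m) (hk : 1 ≤ k) (hg : 1 ≤ g)
    (w : Fin (k * g) → ℝ)
    (hw : ∀ i, 0 < w i ∧ w i ≤ 1) (hmono : Monotone w)
    (w' : Fin (k * g) → ℝ)
    (hw' : ∀ i : Fin (k * g),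
      w' i = w ⟨i.val / g * g + (g - 1), by
        have h1 : i.val < g * k := lt_of_lt_of_eq i.isLt (Nat.mul_comm k g)
        have h2 : i.val / g < k := Nat.div_lt_of_lt_mul h1
        have h3 : (i.val / g + 1) * g ≤ k * g := Nat.mul_le_mul_right g h2
        have h4 : i.val / g * g + 1 * g ≤ k * g := by rw [← Nat.add_mul]; exact h3
        omega⟩)
    (F : Finset (Fin (k * g))) (hF : Packable w m F) :
    ∃ F'' : Finset (Fin (k * g)), Packable w' m F'' ∧ F.card ≤ F''.card + g := by
  classical
  obtain ⟨p, hp⟩ := hF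
  set f : Fin (k * g) → Fin (k * g) :=
    fun i => ⟨i.val - g, lt_of_le_of_lt (Nat.sub_le _ _) i.isLt⟩ with hfdef
  set F1 : Finset (Fin (k * g)) := F.filter (fun i => g ≤ i.val) with hF1
  have hinj : Set.InjOn f F1 := by
    intro a ha b hb hab
    simp only [hF1, Finset.coe_filter, Set.mem_setOf_eq] at ha hb
    have := congrArg Fin.val hab
    simp only [hfdef] at this
    exact Fin.ext (by omega)
  -- key pointwise bound
  have hkey : ∀ i : Fin (k * g), g ≤ i.val → w' (f i) ≤ w i := by
    intro i hgi
    rw [hw' (f i)]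
    apply hmono
    show ((f i).val / g * g + (g - 1)) ≤ i.val
    have hfv : (f i).val = i.val - g := rfl
    have h1 : (i.val - g) / g = i.val / g - 1 := by
      have := Nat.sub_mul_div i.val g 1
      simpa using this
    have h2 : i.val / g * g ≤ i.val := Nat.div_mul_le_self _ _
    have h3 : 1 ≤ i.val / g := (Nat.one_le_div_iff (by omega)).mpr hgi
    have h4 : (i.val / g - 1) * g = i.val / g * g - g := by
      rw [Nat.sub_mul, Nat.one_mul]
    rw [hfv, h1, h4]
    omega
  -- the packing for the shifted set
  set p'' : Fin (k * g) → Fin m :=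
    fun j => if h : j.val + g < k * g then p ⟨j.val + g, h⟩ else p j with hp''
  have hpf : ∀ i : Fin (k * g), g ≤ i.val → p'' (f i) = p i := by
    intro i hgi
    have h : (f i).val + g < k * g := by
      have : (f i).val = i.val - g := rfl
      omega
    simp only [hp'', dif_pos h]
    congr 1
    exact Fin.ext (by simp [hfdef]; omega)
  refine ⟨F1.image f, ⟨p'', ?_⟩, ?_⟩
  · intro j
    have hset : (F1.image f).filter (fun x => p'' x = j)
        = (F1.filter (fun i => p i = j)).image f := by
      ext x
      simp only [Finset.mem_filter, Finset.mem_image]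
      constructor
      · rintro ⟨⟨i, hi, rfl⟩, hpj⟩
        have hgi : g ≤ i.val := (Finset.mem_filter.mp hi).2
        exact ⟨i, ⟨hi, by rw [← hpf i hgi]; exact hpj⟩, rfl⟩
      · rintro ⟨i, ⟨hi, hpj⟩, rfl⟩
        have hgi : g ≤ i.val := (Finset.mem_filter.mp hi).2
        exact ⟨⟨i, hi, rfl⟩, by rw [hpf i hgi]; exact hpj⟩
    rw [hset, Finset.sum_image (fun a ha b hb hab =>
      hinj (Finset.mem_filter.mp ha).1 (Finset.mem_filter.mp hb).1 hab)]
    have step1 : ∑ i ∈ F1.filter (fun i => p i = j), w' (f i)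
        ≤ ∑ i ∈ F1.filter (fun i => p i = j), w i := by
      apply Finset.sum_le_sum
      intro i hi
      have hi1 := Finset.mem_filter.mp (Finset.mem_filter.mp hi).1
      exact hkey i hi1.2
    have step2 : ∑ i ∈ F1.filter (fun i => p i = j), w i
        ≤ ∑ i ∈ F.filter (fun i => p i = j), w i := by
      apply Finset.sum_le_sum_of_subset_of_nonneg
      · intro x hx
        simp only [hF1, Finset.filter_filter, Finset.mem_filter] at hx ⊢
        exact ⟨hx.1, hx.2.2⟩
      · intro i _ _
        exact (hw i).1.le
    exact le_trans step1 (le_trans step2 (hp j))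
  · have hcard1 : (F1.image f).card = F1.card := Finset.card_image_of_injOn hinj
    have hsplit : F1.card
        + (F.filter (fun i => ¬ g ≤ i.val)).card = F.card := by
      rw [hF1]; exact Finset.card_filter_add_card_filter_not _
    have hsmall : (F.filter (fun i => ¬ g ≤ i.val)).card ≤ g := by
      have : (F.filter (fun i => ¬ g ≤ i.val)).card ≤ (Finset.range g).card := by
        apply Finset.card_le_card_of_injOn (fun i => i.val)
        · intro i hi
          simp only [Finset.coe_filter, Finset.mem_coe, Finset.mem_filter, Set.mem_setOf_eq, not_le] at hi
          simpa using hi.2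
        · intro a _ b _ hab
          exact Fin.ext hab
      simpa using this
    rw [hcard1]
    omega
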